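/- Let P be a convex set of probability measures on a Polish space Ω, ΔS : Ω → ℝ^d Borel, and H ⊆ ℝ^d such that the generated projected cone C_H(P) is convex and closed. Then NA(P) holds (i.e., for every H ∈ H, H·ΔS ≥ 0 P-q.s. implies H·ΔS = 0 P-q.s.) if and only if for every P ∈ P there exists a probability measure Q with P ≪ Q, Q absolutely continuous with respect to some member of P, E_Q|ΔS| < ∞, and E_Q[H·ΔS] ≤ 0 for all H ∈ H. -/

import Mathlib

open MeasureTheory Set
open scoped RealInnerProductSpace ENNReal Pointwise
noncomputable section

/-- Quasi-sure support of `ΔS` under a family of measures. -/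
def qsSupport {Ω : Type*} [MeasurableSpace Ω] {d : ℕ} (Pfam : Set (Measure Ω))
    (ΔS : Ω → EuclideanSpace ℝ (Fin d)) : Set (EuclideanSpace ℝ (Fin d)) :=
  ⋂₀ {A | IsClosed A ∧ ∀ P ∈ Pfam, ∀ᵐ ω ∂P, ΔS ω ∈ A}

/-- The generated projected cone `C_𝓗(𝒫)`. -/
def projCone {Ω : Type*} [MeasurableSpace Ω] {d : ℕ} (Pfam : Set (Measure Ω))
    (ΔS : Ω → EuclideanSpace ℝ (Fin d)) (𝓗 : Set (EuclideanSpace ℝ (Fin d))) :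
    Set (EuclideanSpace ℝ (Fin d)) :=
  {x | ∃ c : ℝ, 0 ≤ c ∧ ∃ h ∈ 𝓗,
    x = c • ((Submodule.orthogonalProjectionOnto (Submodule.span ℝ (qsSupport Pfam ΔS)) h :
      EuclideanSpace ℝ (Fin d)))}

section Helpers

lemma ae_mem_qsSupport {Ω : Type*} [TopologicalSpace Ω] [MeasurableSpace Ω]
    {d : ℕ} {Pfam : Set (Measure Ω)}
    {ΔS : Ω → EuclideanSpace ℝ (Fin d)} {P : Measure Ω}
    (hP : P ∈ Pfam) : ∀ᵐ ω ∂P, ΔS ω ∈ qsSupport Pfam ΔS := by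
  set 𝔄 : Set (Set (EuclideanSpace ℝ (Fin d))) :=
    {A | IsClosed A ∧ ∀ P ∈ Pfam, ∀ᵐ ω ∂P, ΔS ω ∈ A} with h𝔄
  obtain ⟨T, hTcount, hTsub, hTU⟩ := TopologicalSpace.isOpen_sUnion_countable (compl '' 𝔄)
    (by rintro _ ⟨A, hA, rfl⟩; exact hA.1.isOpen_compl)
  rw [ae_iff]
  have h1 : {ω | ¬ ΔS ω ∈ qsSupport Pfam ΔS} = ΔS ⁻¹' (⋃₀ T) := by
    rw [hTU, qsSupport, ← h𝔄, ← Set.compl_sInter]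
    rfl
  rw [h1, Set.preimage_sUnion]
  refine measure_biUnion_null_iff hTcount |>.mpr ?_
  intro t ht
  obtain ⟨A, hA, rfl⟩ := hTsub ht
  have := hA.2 P hP
  rw [ae_iff] at this
  convert this using 2
  rfl

lemma sep_weak {E : Type*} [NormedAddCommGroup E] [InnerProductSpace ℝ E]
    [FiniteDimensional ℝ E] {s : Set E} (hs : Convex ℝ s)
    (hne : s.Nonempty) (h0 : (0 : E) ∉ s) :
    ∃ x : E, x ≠ 0 ∧ ∀ v ∈ s, 0 ≤ ⟪x, v⟫ := by
  rcases subsingleton_or_nontrivial E with hsub | hnt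
  · obtain ⟨v, hv⟩ := hne
    exact absurd hv (by rwa [Subsingleton.elim v (0 : E)])
  have hsph : IsCompact (Metric.sphere (0 : E) 1) := isCompact_sphere _ _
  set t : s → Set E := fun v => {x : E | 0 ≤ ⟪x, (v : E)⟫} with ht
  have htc : ∀ v : s, IsClosed (t v) := fun v =>
    isClosed_le continuous_const (continuous_id.inner continuous_const)
  have hnonempty : (Metric.sphere (0 : E) 1 ∩ ⋂ v : s, t v).Nonempty := by
    rw [Set.nonempty_iff_ne_empty]
    intro hempty
    obtain ⟨u, hu⟩ := hsph.elim_finite_subfamily_closed t htc hempty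
    rcases u.eq_empty_or_nonempty with rfl | hune
    · simp only [Finset.notMem_empty, Set.iInter_of_empty, Set.iInter_false,
        Set.iInter_univ, Set.inter_univ] at hu
      exact absurd hu (Set.nonempty_iff_ne_empty.mp
        ((NormedSpace.sphere_nonempty (x := (0:E))).mpr zero_le_one))
    · set pts : Set E := (fun v : s => (v : E)) '' ↑u with hpts
      have hptsfin : pts.Finite := (u.finite_toSet).image _
      have hptss : pts ⊆ s := by rintro _ ⟨v, _, rfl⟩; exact v.2
      have hhullcl : IsClosed (convexHull ℝ pts) := (hptsfin.isCompact_convexHull ℝ).isClosed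
      have h0hull : (0 : E) ∉ convexHull ℝ pts :=
        fun h => h0 (convexHull_min hptss hs h)
      obtain ⟨f, u₀, hfu₀, hfb⟩ :=
        geometric_hahn_banach_point_closed (convex_convexHull ℝ pts) hhullcl h0hull
      set y : E := (InnerProductSpace.toDual ℝ E).symm f with hy
      have hyb : ∀ b : E, ⟪y, b⟫ = f b := fun b => InnerProductSpace.toDual_symm_apply
      have hu₀pos : 0 < u₀ := by simpa using hfu₀
      have hyne : y ≠ 0 := by
        obtain ⟨v, hv⟩ := hune
        intro h
        have := hfb _ (subset_convexHull ℝ pts ⟨v, by exact_mod_cast hv, rfl⟩)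
        rw [← hyb, h, inner_zero_left] at this
        linarith
      have hxmem : ‖y‖⁻¹ • y ∈ Metric.sphere (0 : E) 1 ∩ ⋂ v : s, ⋂ _ : v ∈ u, t v := by
        constructor
        · simp [norm_smul, abs_inv, norm_ne_zero_iff.mpr hyne,
            inv_mul_cancel₀ (norm_ne_zero_iff.mpr hyne)]
        · refine Set.mem_iInter.mpr fun v => Set.mem_iInter.mpr fun hv => ?_
          have hb := hfb _ (subset_convexHull ℝ pts ⟨v, by exact_mod_cast hv, rfl⟩)
          rw [← hyb] at hb
          have : 0 ≤ ⟪y, (v : E)⟫ := le_of_lt (lt_trans hu₀pos hb)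
          simpa [ht, real_inner_smul_left] using
            mul_nonneg (inv_nonneg.mpr (norm_nonneg y)) this
      rw [hu] at hxmem
      exact hxmem
  obtain ⟨x, hxs, hxt⟩ := hnonempty
  refine ⟨x, ?_, fun v hv => ?_⟩
  · intro h
    rw [h] at hxs
    simp at hxs
  · exact Set.mem_iInter.mp hxt ⟨v, hv⟩

variable {Ω : Type*} [MeasurableSpace Ω] {d : ℕ}

def densFn (ΔS : Ω → EuclideanSpace ℝ (Fin d)) (A : Set Ω) : Ω → ℝ≥0∞ :=
  fun ω => ENNReal.ofReal (A.indicator (fun ω => (1 + ‖ΔS ω‖)⁻¹) ω)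

def densMeasure (ΔS : Ω → EuclideanSpace ℝ (Fin d)) (μ : Measure Ω) (A : Set Ω) : Measure Ω :=
  ((μ.withDensity (densFn ΔS A)) univ)⁻¹ • μ.withDensity (densFn ΔS A)

variable {ΔS : Ω → EuclideanSpace ℝ (Fin d)} {μ : Measure Ω} {A : Set Ω}

lemma densFn_meas (hm : Measurable ΔS) (hA : MeasurableSet A) : Measurable (densFn ΔS A) :=
  ((((measurable_const.add hm.norm).inv).indicator hA)).ennreal_ofReal

lemma densFn_le_one : densFn ΔS A ≤ fun _ => 1 := by
  intro ω
  refine ENNReal.ofReal_le_one.mpr ?_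
  rcases Set.indicator_eq_zero_or_self A (fun ω => (1 + ‖ΔS ω‖)⁻¹) ω with h | h <;> rw [h]
  · exact zero_le_one
  · rw [inv_le_one_iff₀]
    right; linarith [norm_nonneg (ΔS ω)]

lemma densFn_pos {ω : Ω} (hω : ω ∈ A) : 0 < densFn ΔS A ω := by
  rw [densFn, Set.indicator_of_mem hω]
  exact ENNReal.ofReal_pos.mpr (by positivity)

section spec
variable (hm : Measurable ΔS) (hA : MeasurableSet A) [IsProbabilityMeasure μ] (hApos : 0 < μ A)

lemma dens_tot_le_one : (μ.withDensity (densFn ΔS A)) univ ≤ 1 := by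
  rw [withDensity_apply _ MeasurableSet.univ, Measure.restrict_univ]
  calc ∫⁻ ω, densFn ΔS A ω ∂μ ≤ ∫⁻ _, 1 ∂μ := lintegral_mono densFn_le_one
  _ = 1 := by simp

include hm hA hApos in
lemma dens_tot_pos : 0 < (μ.withDensity (densFn ΔS A)) univ := by
  rw [pos_iff_ne_zero]
  intro h
  have hA0 : (μ.withDensity (densFn ΔS A)) A = 0 :=
    le_antisymm (h ▸ measure_mono (subset_univ A)) zero_le
  rw [withDensity_apply _ hA, lintegral_eq_zero_iff (densFn_meas hm hA)] at hA0
  rw [Filter.EventuallyEq, ae_restrict_iff' hA] at hA0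
  have : ∀ᵐ ω ∂μ, ω ∉ A := by
    filter_upwards [hA0] with ω hω
    intro hmem
    exact absurd (hω hmem) (ne_of_gt (densFn_pos hmem))
  rw [ae_iff] at this
  simp only [not_not] at this
  exact absurd this (ne_of_gt hApos)

include hm hA hApos in
lemma densMeasure_prob : IsProbabilityMeasure (densMeasure ΔS μ A) := by
  constructor
  rw [densMeasure, Measure.smul_apply, smul_eq_mul]
  exact ENNReal.inv_mul_cancel (ne_of_gt (dens_tot_pos hm hA hApos))
    (lt_of_le_of_lt (dens_tot_le_one) ENNReal.one_lt_top).ne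

lemma densMeasure_ac : densMeasure ΔS μ A ≪ μ := by
  refine Measure.AbsolutelyContinuous.mk fun s hs h0 => ?_
  rw [densMeasure, Measure.smul_apply, smul_eq_mul]
  rw [show (μ.withDensity (densFn ΔS A)) s = 0 from
    (withDensity_absolutelyContinuous μ _) h0, mul_zero]

include hA in
lemma densMeasure_ae_mem : (densMeasure ΔS μ A) Aᶜ = 0 := by
  rw [densMeasure, Measure.smul_apply, smul_eq_mul]
  have : (μ.withDensity (densFn ΔS A)) Aᶜ = 0 := by
    rw [withDensity_apply _ hA.compl]
    rw [setLIntegral_congr_fun hA.compl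
      (fun ω (hω : ω ∈ Aᶜ) =>
        show densFn ΔS A ω = 0 by rw [densFn, Set.indicator_of_notMem hω]; simp)]
    simp
  rw [this, mul_zero]

include hm hA hApos in
lemma densMeasure_int : Integrable (fun ω => ‖ΔS ω‖) (densMeasure ΔS μ A) := by
  constructor
  · exact hm.norm.aestronglyMeasurable
  · rw [HasFiniteIntegral, densMeasure, lintegral_smul_measure]
    have hb : ∫⁻ ω, (‖‖ΔS ω‖‖₊ : ℝ≥0∞) ∂(μ.withDensity (densFn ΔS A)) ≤ 1 := by
      rw [lintegral_withDensity_eq_lintegral_mul _ (densFn_meas hm hA)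
        (by fun_prop)]
      calc ∫⁻ ω, (densFn ΔS A * fun ω => (‖‖ΔS ω‖‖₊ : ℝ≥0∞)) ω ∂μ
          ≤ ∫⁻ _, 1 ∂μ := by
            refine lintegral_mono fun ω => ?_
            simp only [Pi.mul_apply]
            have h1 : densFn ΔS A ω ≤ ENNReal.ofReal ((1 + ‖ΔS ω‖)⁻¹) := by
              rw [densFn]
              rcases Set.indicator_eq_zero_or_self A (fun ω => (1 + ‖ΔS ω‖)⁻¹) ω with h | h <;>
                rw [h] <;> simp
            have h2 : (‖‖ΔS ω‖‖₊ : ℝ≥0∞) = ENNReal.ofReal ‖ΔS ω‖ := by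
              rw [← enorm_eq_nnnorm, ← ofReal_norm, norm_norm]
            calc densFn ΔS A ω * (‖‖ΔS ω‖‖₊ : ℝ≥0∞)
                ≤ ENNReal.ofReal ((1 + ‖ΔS ω‖)⁻¹) * ENNReal.ofReal ‖ΔS ω‖ := by
                  rw [h2]; exact mul_le_mul_left h1 _
              _ = ENNReal.ofReal ((1 + ‖ΔS ω‖)⁻¹ * ‖ΔS ω‖) :=
                  (ENNReal.ofReal_mul (by positivity)).symm
              _ ≤ 1 := by
                  rw [← ENNReal.ofReal_one]
                  refine ENNReal.ofReal_le_ofReal ?_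
                  rw [inv_mul_le_iff₀ (by positivity), mul_one]
                  linarith [norm_nonneg (ΔS ω)]
          _ = 1 := by simp
    calc ((μ.withDensity (densFn ΔS A)) univ)⁻¹ •
          ∫⁻ ω, (‖‖ΔS ω‖‖₊ : ℝ≥0∞) ∂(μ.withDensity (densFn ΔS A))
        ≤ ((μ.withDensity (densFn ΔS A)) univ)⁻¹ * 1 := by
          rw [smul_eq_mul]; exact mul_le_mul_right hb _
      _ < ⊤ := by
          rw [mul_one]
          exact ENNReal.inv_lt_top.mpr (dens_tot_pos hm hA hApos)

include hm hA hApos in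
lemma densMeasure_ac' (hAuniv : A = univ) : μ ≪ densMeasure ΔS μ A := by
  have h1 : μ ≪ μ.withDensity (densFn ΔS A) := by
    refine Measure.AbsolutelyContinuous.mk fun s hs h0 => ?_
    rw [withDensity_apply _ hs, lintegral_eq_zero_iff (densFn_meas hm hA)] at h0
    rw [Filter.EventuallyEq, ae_restrict_iff' hs] at h0
    have : ∀ᵐ ω ∂μ, ω ∉ s := by
      filter_upwards [h0] with ω hω hmem
      exact absurd (hω hmem) (ne_of_gt (densFn_pos (hAuniv ▸ Set.mem_univ ω)))
    rw [ae_iff] at this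
    simpa using this
  refine h1.trans (Measure.AbsolutelyContinuous.mk fun s hs h0 => ?_)
  rw [densMeasure, Measure.smul_apply, smul_eq_mul] at h0
  rcases mul_eq_zero.mp h0 with h | h
  · exact absurd h (by
      simp only [ENNReal.inv_eq_zero]
      exact (lt_of_le_of_lt dens_tot_le_one ENNReal.one_lt_top).ne)
  · exact h

end spec

lemma ac_smul_add_left {μ ν ρ : Measure Ω} {a b : ℝ≥0∞} (ha : a ≠ 0) (hρ : ρ = a • μ + b • ν) :
    μ ≪ ρ := by
  subst hρ
  refine Measure.AbsolutelyContinuous.mk fun s hs h0 => ?_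
  rw [Measure.add_apply, Measure.smul_apply, Measure.smul_apply, smul_eq_mul, smul_eq_mul,
    add_eq_zero] at h0
  rcases mul_eq_zero.mp h0.1 with h | h
  · exact absurd h ha
  · exact h

lemma mix_ac {Q₁ Q₂ ρ₁ ρ₂ : Measure Ω} (h1 : Q₁ ≪ ρ₁) (h2 : Q₂ ≪ ρ₂) {a b : ℝ≥0∞} :
    a • Q₁ + b • Q₂ ≪ (2⁻¹ : ℝ≥0∞) • ρ₁ + (2⁻¹ : ℝ≥0∞) • ρ₂ := by
  refine Measure.AbsolutelyContinuous.mk fun s hs h0 => ?_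
  rw [Measure.add_apply, Measure.smul_apply, Measure.smul_apply, smul_eq_mul, smul_eq_mul,
    add_eq_zero] at h0
  have hρ₁ : ρ₁ s = 0 := by
    rcases mul_eq_zero.mp h0.1 with h | h
    · exact absurd h (by simp)
    · exact h
  have hρ₂ : ρ₂ s = 0 := by
    rcases mul_eq_zero.mp h0.2 with h | h
    · exact absurd h (by simp)
    · exact h
  rw [Measure.add_apply, Measure.smul_apply, Measure.smul_apply, smul_eq_mul, smul_eq_mul,
    h1 hρ₁, h2 hρ₂, mul_zero, mul_zero, add_zero]

lemma mix_prob {Q₁ Q₂ : Measure Ω} [IsProbabilityMeasure Q₁] [IsProbabilityMeasure Q₂]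
    {a b : ℝ} (ha : 0 ≤ a) (hb : 0 ≤ b) (hab : a + b = 1) :
    IsProbabilityMeasure (ENNReal.ofReal a • Q₁ + ENNReal.ofReal b • Q₂) := by
  constructor
  rw [Measure.add_apply, Measure.smul_apply, Measure.smul_apply, smul_eq_mul, smul_eq_mul,
    measure_univ, measure_univ, mul_one, mul_one, ← ENNReal.ofReal_add ha hb, hab,
    ENNReal.ofReal_one]

lemma mix_integrable {F : Type*} [NormedAddCommGroup F] {f : Ω → F} {Q₁ Q₂ : Measure Ω}
    (h1 : Integrable f Q₁) (h2 : Integrable f Q₂) {a b : ℝ} (ha : 0 < a) (hb : 0 < b) :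
    Integrable f (ENNReal.ofReal a • Q₁ + ENNReal.ofReal b • Q₂) :=
  integrable_add_measure.mpr
    ⟨(integrable_smul_measure (by simp [ha]) ENNReal.ofReal_ne_top).mpr h1,
     (integrable_smul_measure (by simp [hb]) ENNReal.ofReal_ne_top).mpr h2⟩

lemma mix_integral {F : Type*} [NormedAddCommGroup F] [NormedSpace ℝ F] {f : Ω → F}
    {Q₁ Q₂ : Measure Ω} (h1 : Integrable f Q₁) (h2 : Integrable f Q₂)
    {a b : ℝ} (ha : 0 < a) (hb : 0 < b) :
    ∫ ω, f ω ∂(ENNReal.ofReal a • Q₁ + ENNReal.ofReal b • Q₂) =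
      a • ∫ ω, f ω ∂Q₁ + b • ∫ ω, f ω ∂Q₂ := by
  rw [integral_add_measure
      ((integrable_smul_measure (by simp [ha]) ENNReal.ofReal_ne_top).mpr h1)
      ((integrable_smul_measure (by simp [hb]) ENNReal.ofReal_ne_top).mpr h2),
    integral_smul_measure, integral_smul_measure,
    ENNReal.toReal_ofReal ha.le, ENNReal.toReal_ofReal hb.le]

end Helpers

set_option maxHeartbeats 1000000 in
/-- Theorem 2.1: the one-period robust FTAP with convex closed portfolio
constraints. NA(𝒫) holds iff every `P ∈ 𝒫` is dominated by some `Q ⋘ 𝒫` with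
`E_Q|ΔS| < ∞` and `E_Q[H·ΔS] ≤ 0` for all `H ∈ 𝓗`. -/
theorem stmt9 {Ω : Type*} [TopologicalSpace Ω] [PolishSpace Ω] [MeasurableSpace Ω] [BorelSpace Ω]
    {d : ℕ} (Pfam : Set (Measure Ω))
    (hprob : ∀ P ∈ Pfam, IsProbabilityMeasure P)
    (hconvex : ∀ P ∈ Pfam, ∀ P' ∈ Pfam, ∀ a b : ℝ≥0∞, a + b = 1 → a • P + b • P' ∈ Pfam)
    (ΔS : Ω → EuclideanSpace ℝ (Fin d)) (hmeas : Measurable ΔS)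
    (𝓗 : Set (EuclideanSpace ℝ (Fin d)))
    (hCconvex : Convex ℝ (projCone Pfam ΔS 𝓗))
    (hCclosed : IsClosed (projCone Pfam ΔS 𝓗)) :
    (∀ H ∈ 𝓗, (∀ P ∈ Pfam, ∀ᵐ ω ∂P, 0 ≤ ⟪H, ΔS ω⟫) →
        (∀ P ∈ Pfam, ∀ᵐ ω ∂P, ⟪H, ΔS ω⟫ = 0)) ↔
    (∀ P ∈ Pfam, ∃ Q : Measure Ω, IsProbabilityMeasure Q ∧ P ≪ Q ∧
        (∃ P' ∈ Pfam, Q ≪ P') ∧ Integrable (fun ω => ‖ΔS ω‖) Q ∧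
        ∀ H ∈ 𝓗, ∫ ω, ⟪H, ΔS ω⟫ ∂Q ≤ 0) := by
  classical
  constructor
  · -- hard direction
    intro hNA P hP
    haveI hPprob := hprob P hP
    have hunivpos : (0:ℝ≥0∞) < P univ := by simp
    haveI hQ₀prob : IsProbabilityMeasure (densMeasure ΔS P univ) :=
      densMeasure_prob hmeas MeasurableSet.univ hunivpos
    have hQ₀ac : densMeasure ΔS P univ ≪ P := densMeasure_ac
    have hQ₀ac' : P ≪ densMeasure ΔS P univ :=
      densMeasure_ac' hmeas MeasurableSet.univ hunivpos rfl
    have hQ₀int : Integrable (fun ω => ‖ΔS ω‖) (densMeasure ΔS P univ) :=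
      densMeasure_int hmeas MeasurableSet.univ hunivpos
    by_cases h𝓗 : 𝓗 = ∅
    · exact ⟨densMeasure ΔS P univ, hQ₀prob, hQ₀ac', ⟨P, hP, hQ₀ac⟩, hQ₀int, by simp [h𝓗]⟩
    have hinnermeas : ∀ x : EuclideanSpace ℝ (Fin d), Measurable (fun ω => ⟪x, ΔS ω⟫) :=
      fun x => (continuous_const.inner continuous_id).measurable.comp hmeas
    have hinnerint : ∀ (Q : Measure Ω), Integrable (fun ω => ‖ΔS ω‖) Q →
        ∀ x : EuclideanSpace ℝ (Fin d), Integrable (fun ω => ⟪x, ΔS ω⟫) Q := by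
      intro Q hQ x
      refine Integrable.mono (hQ.const_mul ‖x‖) (hinnermeas x).aestronglyMeasurable ?_
      refine Filter.Eventually.of_forall fun ω => ?_
      simpa [Real.norm_eq_abs,
        abs_of_nonneg (mul_nonneg (norm_nonneg x) (norm_nonneg (ΔS ω)))] using
        abs_real_inner_le_norm x (ΔS ω)
    have hvecint : ∀ (Q : Measure Ω), Integrable (fun ω => ‖ΔS ω‖) Q → Integrable ΔS Q :=
      fun Q hQ => (integrable_norm_iff hmeas.aestronglyMeasurable).mp hQ
    set N := Submodule.span ℝ (qsSupport Pfam ΔS) with hN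
    have haeN : ∀ {Q P' : Measure Ω}, P' ∈ Pfam → Q ≪ P' →
        ∀ᵐ ω ∂Q, ΔS ω ∈ (N : Set (EuclideanSpace ℝ (Fin d))) := by
      intro Q P' hP' hQ
      exact Filter.Eventually.filter_mono hQ.ae_le
        (Filter.Eventually.mono (ae_mem_qsSupport hP') fun ω hω => Submodule.subset_span hω)
    have hprojeq : ∀ (H w : EuclideanSpace ℝ (Fin d)), w ∈ N →
        ⟪H, w⟫ = ⟪((Submodule.orthogonalProjectionOnto N H : EuclideanSpace ℝ (Fin d))), w⟫ := by
      intro H w hw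
      have hsub : H - (Submodule.orthogonalProjectionOnto N H : EuclideanSpace ℝ (Fin d)) ∈ Nᗮ :=
        Submodule.sub_starProjection_mem_orthogonal (K := N) H
      have h2 := (Submodule.mem_orthogonal' N _).mp hsub w hw
      rw [inner_sub_left] at h2
      linarith
    set 𝒬 : Set (Measure Ω) := {Q | IsProbabilityMeasure Q ∧ P ≪ Q ∧
      (∃ P' ∈ Pfam, Q ≪ P') ∧ Integrable (fun ω => ‖ΔS ω‖) Q} with h𝒬
    have hQ₀mem : densMeasure ΔS P univ ∈ 𝒬 := ⟨hQ₀prob, hQ₀ac', ⟨P, hP, hQ₀ac⟩, hQ₀int⟩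
    by_cases hgood : ∃ Q ∈ 𝒬, ∀ x ∈ projCone Pfam ΔS 𝓗, ⟪x, ∫ ω, ΔS ω ∂Q⟫ ≤ 0
    · obtain ⟨Q, ⟨hQp, hPQ, hQdom, hQint⟩, hQle⟩ := hgood
      refine ⟨Q, hQp, hPQ, hQdom, hQint, fun H hH => ?_⟩
      obtain ⟨P', hP', hQP'⟩ := hQdom
      have hxH : ((Submodule.orthogonalProjectionOnto N H : EuclideanSpace ℝ (Fin d))) ∈ projCone Pfam ΔS 𝓗 :=
        ⟨1, zero_le_one, H, hH, (one_smul _ _).symm⟩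
      have h1 : ∫ ω, ⟪H, ΔS ω⟫ ∂Q =
          ∫ ω, ⟪((Submodule.orthogonalProjectionOnto N H : EuclideanSpace ℝ (Fin d))), ΔS ω⟫ ∂Q := by
        refine integral_congr_ae ?_
        filter_upwards [haeN hP' hQP'] with ω hω
        exact hprojeq H _ hω
      rw [h1, integral_inner (hvecint Q hQint)]
      exact hQle _ hxH
    · push_neg at hgood
      set S : Set (EuclideanSpace ℝ (Fin d)) := (fun Q : Measure Ω => ∫ ω, ΔS ω ∂Q) '' 𝒬 with hS
      set D : Set (EuclideanSpace ℝ (Fin d)) :=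
        {v | ∀ x ∈ projCone Pfam ΔS 𝓗, ⟪x, v⟫ ≤ 0} with hD
      have hSD : ∀ w ∈ S, w ∉ D := by
        rintro _ ⟨Q, hQ, rfl⟩ hwD
        obtain ⟨x, hxC, hxgt⟩ := hgood Q hQ
        exact absurd (hwD x hxC) (not_le.mpr hxgt)
      have hSconv : Convex ℝ S := by
        rintro _ ⟨Q₁, hQ₁, rfl⟩ _ ⟨Q₂, hQ₂, rfl⟩ a b ha hb hab
        rcases ha.eq_or_lt with rfl | ha'
        · have hb1 : b = 1 := by linarith
          subst hb1
          simpa using ⟨Q₂, hQ₂, rfl⟩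
        rcases hb.eq_or_lt with rfl | hb'
        · have ha1 : a = 1 := by linarith
          subst ha1
          simpa using ⟨Q₁, hQ₁, rfl⟩
        obtain ⟨hQ₁p, hPQ₁, ⟨P₁', hP₁', hQP₁'⟩, hQ₁i⟩ := hQ₁
        obtain ⟨hQ₂p, hPQ₂, ⟨P₂', hP₂', hQP₂'⟩, hQ₂i⟩ := hQ₂
        haveI := hQ₁p; haveI := hQ₂p
        refine ⟨ENNReal.ofReal a • Q₁ + ENNReal.ofReal b • Q₂, ⟨?_, ?_, ?_, ?_⟩, ?_⟩
        · exact mix_prob ha hb hab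
        · exact hPQ₁.trans (ac_smul_add_left (by simp [ha']) rfl)
        · exact ⟨(2⁻¹ : ℝ≥0∞) • P₁' + (2⁻¹ : ℝ≥0∞) • P₂',
            hconvex P₁' hP₁' P₂' hP₂' 2⁻¹ 2⁻¹ ENNReal.inv_two_add_inv_two,
            mix_ac hQP₁' hQP₂'⟩
        · exact mix_integrable hQ₁i hQ₂i ha' hb'
        · exact mix_integral (hvecint _ hQ₁i) (hvecint _ hQ₂i) ha' hb'
      have hDconv : Convex ℝ D := by
        intro v hv w hw a b ha hb hab
        intro x hx
        rw [inner_add_right, real_inner_smul_right, real_inner_smul_right]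
        have h1 : a * ⟪x, v⟫ ≤ 0 := mul_nonpos_of_nonneg_of_nonpos ha (hv x hx)
        have h2 : b * ⟪x, w⟫ ≤ 0 := mul_nonpos_of_nonneg_of_nonpos hb (hw x hx)
        linarith
      have hDne : (0 : EuclideanSpace ℝ (Fin d)) ∈ D := fun z hz => by simp
      have h0SD : (0 : EuclideanSpace ℝ (Fin d)) ∉ S - D := by
        intro h0
        obtain ⟨w, hw, v, hv, hwv⟩ := Set.mem_sub.mp h0
        have : w = v := by
          have := sub_eq_zero.mp hwv
          exact this
        exact hSD w hw (this ▸ hv)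
      have hw₀S : (∫ ω, ΔS ω ∂(densMeasure ΔS P univ)) ∈ S := ⟨_, hQ₀mem, rfl⟩
      obtain ⟨x, hxne, hxsep⟩ := sep_weak (hSconv.sub hDconv)
        ⟨_, Set.sub_mem_sub hw₀S hDne⟩ h0SD
      have hle : ∀ w ∈ S, ∀ v ∈ D, ⟪x, v⟫ ≤ ⟪x, w⟫ := by
        intro w hw v hv
        have := hxsep _ (Set.sub_mem_sub hw hv)
        rw [inner_sub_right] at this
        linarith
      have hDle : ∀ v ∈ D, ⟪x, v⟫ ≤ 0 := by
        intro v hv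
        by_contra hpos
        push_neg at hpos
        have hxw₀ : 0 < ⟪x, ∫ ω, ΔS ω ∂(densMeasure ΔS P univ)⟫ :=
          lt_of_lt_of_le hpos (hle _ hw₀S _ hv)
        have hcpos : 0 < (⟪x, ∫ ω, ΔS ω ∂(densMeasure ΔS P univ)⟫ + 1) / ⟪x, v⟫ :=
          div_pos (by linarith) hpos
        have hcv : ((⟪x, ∫ ω, ΔS ω ∂(densMeasure ΔS P univ)⟫ + 1) / ⟪x, v⟫) • v ∈ D :=
          fun z hz => by
            rw [real_inner_smul_right]
            exact mul_nonpos_of_nonneg_of_nonpos hcpos.le (hv z hz)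
        have := hle _ hw₀S _ hcv
        rw [real_inner_smul_right, div_mul_cancel₀ _ (ne_of_gt hpos)] at this
        linarith
      have hSge : ∀ w ∈ S, 0 ≤ ⟪x, w⟫ := fun w hw => by
        have := hle w hw 0 hDne
        rwa [inner_zero_right] at this
      have h0C : (0 : EuclideanSpace ℝ (Fin d)) ∈ projCone Pfam ΔS 𝓗 := by
        obtain ⟨h, hh⟩ := Set.nonempty_iff_ne_empty.mpr h𝓗
        exact ⟨0, le_refl 0, h, hh, (zero_smul _ _).symm⟩
      set K : ConvexCone ℝ (EuclideanSpace ℝ (Fin d)) :=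
        { carrier := projCone Pfam ΔS 𝓗
          smul_mem' := by
            rintro c hc _ ⟨c', hc', h, hh, rfl⟩
            exact ⟨c * c', mul_nonneg hc.le hc', h, hh, smul_smul c c' _⟩
          add_mem' := by
            intro y hy z hz
            have hmid := hCconvex hy hz (by norm_num : (0:ℝ) ≤ 1/2)
              (by norm_num : (0:ℝ) ≤ 1/2) (by norm_num)
            obtain ⟨c', hc', h, hh, heq⟩ := hmid
            refine ⟨2 * c', by positivity, h, hh, ?_⟩
            have h2 : y + z = (2:ℝ) • ((1/2:ℝ) • y + (1/2:ℝ) • z) := by module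
            rw [h2, heq, smul_smul] } with hK
      have hxC : x ∈ projCone Pfam ΔS 𝓗 := by
        by_contra hxCn
        obtain ⟨y, hy1, hy2⟩ : ∃ y, (∀ z ∈ K, 0 ≤ ⟪z, y⟫) ∧ ⟪y, x⟫ < 0 := by
          obtain ⟨y, h1, h2⟩ := ProperCone.hyperplane_separation'
            (⟨K.toPointedCone h0C, hCclosed⟩ : ProperCone ℝ (EuclideanSpace ℝ (Fin d))) hxCn
          exact ⟨y, h1, by rwa [real_inner_comm]⟩
        have hyD : -y ∈ D := fun z hz => by
          rw [inner_neg_right]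
          exact neg_nonpos.mpr (hy1 z hz)
        have hd := hDle _ hyD
        rw [inner_neg_right] at hd
        rw [real_inner_comm] at hy2
        linarith
      have hneg : ∃ P'' ∈ Pfam, 0 < P'' {ω | ⟪x, ΔS ω⟫ < 0} := by
        by_contra hnot
        push_neg at hnot
        have hge_qs : ∀ P'' ∈ Pfam, ∀ᵐ ω ∂P'', 0 ≤ ⟪x, ΔS ω⟫ := by
          intro P'' hP''
          have h0 : P'' {ω | ⟪x, ΔS ω⟫ < 0} = 0 :=
            le_antisymm (hnot P'' hP'') zero_le
          rw [ae_iff]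
          convert h0 using 2
          ext ω
          simp [not_le]
        obtain ⟨c, hc0, h, hh, hxeq⟩ := hxC
        have hcpos : 0 < c := by
          rcases hc0.eq_or_lt with rfl | h'
          · exact absurd (by rw [hxeq, zero_smul] : x = 0) hxne
          · exact h'
        have hgeh : ∀ P'' ∈ Pfam, ∀ᵐ ω ∂P'', 0 ≤ ⟪h, ΔS ω⟫ := by
          intro P'' hP''
          filter_upwards [hge_qs P'' hP'',
            haeN hP'' (Measure.AbsolutelyContinuous.refl P'')] with ω h1 h2
          rw [hxeq, real_inner_smul_left, ← hprojeq h _ h2] at h1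
          nlinarith
        have hzeroh := hNA h hh hgeh
        have hZ : qsSupport Pfam ΔS ⊆ ((ℝ ∙ x)ᗮ : Set (EuclideanSpace ℝ (Fin d))) := by
          apply Set.sInter_subset_of_mem
          refine ⟨Submodule.closed_of_finiteDimensional _, ?_⟩
          intro P'' hP''
          filter_upwards [hzeroh P'' hP'',
            haeN hP'' (Measure.AbsolutelyContinuous.refl P'')] with ω h1 h2
          rw [SetLike.mem_coe, Submodule.mem_orthogonal_singleton_iff_inner_right]
          rw [hxeq, real_inner_smul_left, ← hprojeq h _ h2, h1, mul_zero]
        have hNle : N ≤ (ℝ ∙ x)ᗮ := Submodule.span_le.mpr hZ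
        have hxN : x ∈ N := by
          rw [hxeq]
          exact N.smul_mem c (SetLike.coe_mem _)
        have hxx := Submodule.mem_orthogonal_singleton_iff_inner_right.mp (hNle hxN)
        exact hxne (inner_self_eq_zero.mp hxx)
      obtain ⟨P'', hP'', hApos⟩ := hneg
      haveI := hprob P'' hP''
      have hAmeas : MeasurableSet {ω | ⟪x, ΔS ω⟫ < 0} :=
        measurableSet_lt (hinnermeas x) measurable_const
      haveI hQ₂prob : IsProbabilityMeasure (densMeasure ΔS P'' {ω | ⟪x, ΔS ω⟫ < 0}) :=
        densMeasure_prob hmeas hAmeas hApos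
      have hQ₂ac : densMeasure ΔS P'' {ω | ⟪x, ΔS ω⟫ < 0} ≪ P'' := densMeasure_ac
      have hQ₂int : Integrable (fun ω => ‖ΔS ω‖) (densMeasure ΔS P'' {ω | ⟪x, ΔS ω⟫ < 0}) :=
        densMeasure_int hmeas hAmeas hApos
      have hQ₂Ac : densMeasure ΔS P'' {ω | ⟪x, ΔS ω⟫ < 0} {ω | ⟪x, ΔS ω⟫ < 0}ᶜ = 0 :=
        densMeasure_ae_mem hAmeas
      have hbneg : ∫ ω, ⟪x, ΔS ω⟫ ∂(densMeasure ΔS P'' {ω | ⟪x, ΔS ω⟫ < 0}) < 0 := by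
        have hf0 : ∀ᵐ ω ∂(densMeasure ΔS P'' {ω | ⟪x, ΔS ω⟫ < 0}), 0 ≤ -⟪x, ΔS ω⟫ := by
          rw [ae_iff]
          refine measure_mono_null ?_ hQ₂Ac
          intro ω hω
          simp only [mem_setOf_eq, not_le] at hω
          simp only [mem_compl_iff, mem_setOf_eq, not_lt]
          linarith
        have hfint : Integrable (fun ω => -⟪x, ΔS ω⟫)
            (densMeasure ΔS P'' {ω | ⟪x, ΔS ω⟫ < 0}) := (hinnerint _ hQ₂int x).neg
        have hsupp : 0 < (densMeasure ΔS P'' {ω | ⟪x, ΔS ω⟫ < 0})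
            (Function.support fun ω => -⟪x, ΔS ω⟫) := by
          have hQ₂A : 0 < (densMeasure ΔS P'' {ω | ⟪x, ΔS ω⟫ < 0}) {ω | ⟪x, ΔS ω⟫ < 0} := by
            have hh := measure_add_measure_compl
              (μ := densMeasure ΔS P'' {ω | ⟪x, ΔS ω⟫ < 0}) hAmeas
            rw [hQ₂Ac, add_zero, measure_univ] at hh
            rw [hh]
            exact zero_lt_one
          refine lt_of_lt_of_le hQ₂A (measure_mono ?_)
          intro ω hω
          simp only [Function.mem_support]
          rw [mem_setOf_eq] at hω
          intro h0
          have : ⟪x, ΔS ω⟫ = 0 := by linarith [neg_eq_zero.mp h0]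
          linarith
        have hpos := (integral_pos_iff_support_of_nonneg_ae hf0 hfint).mpr hsupp
        rw [integral_neg] at hpos
        linarith
      -- the mixture giving the contradiction
      have hab : ∀ l : ℝ, 0 < l → l < 1 →
          (ENNReal.ofReal l • densMeasure ΔS P univ +
            ENNReal.ofReal (1 - l) • densMeasure ΔS P'' {ω | ⟪x, ΔS ω⟫ < 0}) ∈ 𝒬 := by
        intro l hl0 hl1
        have hl1' : (0:ℝ) < 1 - l := by linarith
        refine ⟨mix_prob hl0.le hl1'.le (by ring), hQ₀ac'.trans
          (ac_smul_add_left (by simp [hl0]) rfl), ?_, mix_integrable hQ₀int hQ₂int hl0 hl1'⟩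
        exact ⟨(2⁻¹ : ℝ≥0∞) • P + (2⁻¹ : ℝ≥0∞) • P'',
          hconvex P hP P'' hP'' 2⁻¹ 2⁻¹ ENNReal.inv_two_add_inv_two,
          mix_ac hQ₀ac hQ₂ac⟩
      set a := ∫ ω, ⟪x, ΔS ω⟫ ∂(densMeasure ΔS P univ) with hadef
      set b := ∫ ω, ⟪x, ΔS ω⟫ ∂(densMeasure ΔS P'' {ω | ⟪x, ΔS ω⟫ < 0}) with hbdef
      set l := min (1/2 : ℝ) (-b / (2 * (|a| + 1))) with hldef
      have hl0 : 0 < l := lt_min (by norm_num) (div_pos (by linarith) (by positivity))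
      have hlhalf : l ≤ 1/2 := min_le_left _ _
      have hl2 : l ≤ -b / (2 * (|a| + 1)) := min_le_right _ _
      have hl1 : l < 1 := lt_of_le_of_lt hlhalf (by norm_num)
      have hl1' : (0:ℝ) < 1 - l := by linarith
      have hQmmem := hab l hl0 hl1
      have hwS : (∫ ω, ΔS ω ∂(ENNReal.ofReal l • densMeasure ΔS P univ +
          ENNReal.ofReal (1 - l) • densMeasure ΔS P'' {ω | ⟪x, ΔS ω⟫ < 0})) ∈ S :=
        ⟨_, hQmmem, rfl⟩
      have h0le := hSge _ hwS
      rw [← integral_inner (hvecint _ hQmmem.2.2.2)] at h0le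
      rw [mix_integral (hinnerint _ hQ₀int x) (hinnerint _ hQ₂int x) hl0 hl1'] at h0le
      rw [smul_eq_mul, smul_eq_mul, ← hadef, ← hbdef] at h0le
      have hfinal : l * a + (1 - l) * b < 0 := by
        have h2 := (le_div_iff₀ (by positivity : (0:ℝ) < 2 * (|a| + 1))).mp hl2
        nlinarith [le_abs_self a, abs_nonneg a,
          mul_nonpos_of_nonpos_of_nonneg hbneg.le (by linarith : (0:ℝ) ≤ 1/2 - l),
          mul_le_mul_of_nonneg_left (le_abs_self a) hl0.le]
      linarith
  · -- easy direction
    intro hQex H hH hge P hP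
    obtain ⟨Q, hQprob, hPQ, ⟨P', hP', hQP'⟩, hQint, hQle⟩ := hQex P hP
    haveI := hQprob
    have hgeQ : ∀ᵐ ω ∂Q, 0 ≤ ⟪H, ΔS ω⟫ :=
      Filter.Eventually.filter_mono hQP'.ae_le (hge P' hP')
    have hint : Integrable (fun ω => ⟪H, ΔS ω⟫) Q := by
      refine Integrable.mono (hQint.const_mul ‖H‖)
        (((continuous_const.inner continuous_id).measurable.comp hmeas).aestronglyMeasurable) ?_
      refine Filter.Eventually.of_forall fun ω => ?_
      simpa [Real.norm_eq_abs,
        abs_of_nonneg (mul_nonneg (norm_nonneg H) (norm_nonneg (ΔS ω)))] using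
        abs_real_inner_le_norm H (ΔS ω)
    have hz : ∫ ω, ⟪H, ΔS ω⟫ ∂Q = 0 :=
      le_antisymm (hQle H hH) (integral_nonneg_of_ae hgeQ)
    have hzero : (fun ω => ⟪H, ΔS ω⟫) =ᵐ[Q] 0 :=
      (integral_eq_zero_iff_of_nonneg_ae hgeQ hint).mp hz
    exact Filter.Eventually.filter_mono hPQ.ae_le (hzero.mono fun ω hω => by simpa using hω)
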